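/- Let n ≥ 5 be odd and z_0 = -n/(n+1). Define ω̃(z) = -z^n (z^{n+1} + (n/2 - 1)z - n/2)/(1 + (n/2 - 1)z^n - (n/2)z^{n+1}). Then |ω̃(z_0)| > 1. -/

import Mathlib

noncomputable def dilaReal (n : ℕ) : ℝ :=
  -(-((n:ℝ) / ((n:ℝ) + 1))) ^ n *
      ((-((n:ℝ) / ((n:ℝ) + 1))) ^ (n + 1) + ((n:ℝ) / 2 - 1) * (-((n:ℝ) / ((n:ℝ) + 1))) - (n:ℝ) / 2)
    / (1 + ((n:ℝ) / 2 - 1) * (-((n:ℝ) / ((n:ℝ) + 1))) ^ n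
        - ((n:ℝ) / 2) * (-((n:ℝ) / ((n:ℝ) + 1))) ^ (n + 1))

lemma real_key (n : ℕ) (hn : 5 ≤ n) (hodd : Odd n) : 1 < |dilaReal n| := by
  have hN : (5:ℝ) ≤ (n:ℝ) := by exact_mod_cast hn
  set N : ℝ := (n:ℝ) with hNdef
  have hN0 : (0:ℝ) < N := by linarith
  have hN1 : (0:ℝ) < N + 1 := by linarith
  set t : ℝ := N / (N + 1) with htdef
  have ht0 : 0 < t := by positivity
  have ht1 : t < 1 := by rw [htdef, div_lt_one hN1]; linarith
  have htN : t * (N + 1) = N := by rw [htdef]; field_simp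
  set s : ℝ := t ^ n with hsdef
  have hs0 : 0 < s := by positivity
  have hs1 : s < 1 := by exact pow_lt_one₀ ht0.le ht1 (by omega)
  have hmul : s * (1 + 1 / N) ^ n = 1 := by
    rw [hsdef, ← mul_pow]
    have : t * (1 + 1 / N) = 1 := by rw [htdef]; field_simp
    rw [this, one_pow]
  have hexp : (1 + 1 / N) ^ n ≤ Real.exp 1 := by
    calc (1 + 1 / N) ^ n ≤ (Real.exp (1 / N)) ^ n := by
          apply pow_le_pow_left₀ (by positivity)
          linarith [Real.add_one_le_exp (1 / N)]
      _ = Real.exp ((n : ℝ) * (1 / N)) := by rw [← Real.exp_nat_mul]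
      _ = Real.exp 1 := by
          rw [← hNdef, mul_one_div, div_self (ne_of_gt hN0)]
  have he3 : Real.exp 1 < 3 := by linarith [Real.exp_one_lt_d9]
  have hA : (1 + 1 / N) ^ n < 3 := lt_of_le_of_lt hexp he3
  have hs3 : 1 / 3 < s := by nlinarith
  have hneg1 : (-t) ^ n = -s := hodd.neg_pow t
  have hneg2 : (-t) ^ (n + 1) = s * t := by
    rw [(hodd.add_one).neg_pow, hsdef, pow_succ]
  have hb : 3 ≤ (N / 2 - 1) + (N / 2) * t := by nlinarith
  clear_value s t N
  rw [dilaReal, ← hNdef, ← htdef, hneg1, hneg2]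
  set num : ℝ := - -s * (s * t + (N / 2 - 1) * -t - N / 2) with hnum
  set den : ℝ := 1 + (N / 2 - 1) * -s - N / 2 * (s * t) with hden
  clear_value num den
  have hd : den < 0 := by
    have h1 : 1 < s * ((N / 2 - 1) + (N / 2) * t) := by nlinarith
    have h2 : den = 1 - s * ((N / 2 - 1) + (N / 2) * t) := by rw [hden]; ring
    linarith
  have hnd : num < den := by
    have h2 : den - num = 1 + s * (1 - t) - s ^ 2 * t := by rw [hden, hnum]; ring
    nlinarith
  have hq : 1 < num / den := by
    rw [show num / den = (-num) / (-den) by ring, one_lt_div (by linarith : (0:ℝ) < -den)]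
    linarith
  rw [abs_of_pos (by linarith)]
  exact hq

theorem dilatation_gt_one (n : ℕ) (hn : 5 ≤ n) (hodd : Odd n) :
    1 < ‖(fun z : ℂ => -z ^ n * (z ^ (n + 1) + ((n : ℂ) / 2 - 1) * z - (n : ℂ) / 2)
        / (1 + ((n : ℂ) / 2 - 1) * z ^ n - ((n : ℂ) / 2) * z ^ (n + 1)))
      (-(n : ℂ) / ((n : ℂ) + 1))‖ := by
  have key : (fun z : ℂ => -z ^ n * (z ^ (n + 1) + ((n : ℂ) / 2 - 1) * z - (n : ℂ) / 2)
        / (1 + ((n : ℂ) / 2 - 1) * z ^ n - ((n : ℂ) / 2) * z ^ (n + 1)))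
      (-(n : ℂ) / ((n : ℂ) + 1)) = ((dilaReal n : ℝ) : ℂ) := by
    simp only [dilaReal]
    push_cast
    ring
  rw [key, Complex.norm_real]
  exact real_key n hn hodd
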